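/- Let X and Y be discrete random variables on finite sets with joint pmf p(x,y) and marginals p(x), p(y), and let q(y|x) be any conditional pmf with q(y|x) > 0 whenever p(x,y) > 0. Then I(X;Y) ≥ E_{p(x,y)}[log(q(y|x)/p(y))], with equality iff q(y|x) = p(y|x) on the support of p. -/

import Mathlib

open Finset

private lemma ba_aux1 {a b : ℝ} (ha : 0 ≤ a) (hb : 0 ≤ b) (hab : 0 < a → 0 < b) :
    a - b ≤ a * Real.log (a / b) := by
  rcases eq_or_lt_of_le ha with h | h
  · simp [← h]; linarith
  · have hb' := hab h
    have hlog := Real.log_le_sub_one_of_pos (div_pos hb' h)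
    rw [Real.log_div hb'.ne' h.ne'] at hlog
    rw [Real.log_div h.ne' hb'.ne']
    have h2 := mul_le_mul_of_nonneg_left hlog (le_of_lt h)
    have hba : a * (b / a) = b := by field_simp
    nlinarith

private lemma ba_aux2 {a b : ℝ} (ha : 0 < a) (hb : 0 < b)
    (h : a * Real.log (a / b) = a - b) : b = a := by
  by_contra hne
  have hba : b / a ≠ 1 := by
    intro h1
    rw [div_eq_one_iff_eq ha.ne'] at h1
    exact hne h1
  have hlog := Real.log_lt_sub_one_of_pos (div_pos hb ha) hba
  rw [Real.log_div hb.ne' ha.ne'] at hlog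
  rw [Real.log_div ha.ne' hb.ne'] at h
  have h2 := mul_lt_mul_of_pos_left hlog ha
  have hba2 : a * (b / a) = b := by field_simp
  nlinarith

open Finset in
/-- Barber–Agakov variational lower bound on mutual information for finite
discrete random variables, with the equality characterization: equality holds
iff `q(y|x) = p(y|x)` on the support of `p`. -/
theorem barber_agakov_bound {α β : Type*} [Fintype α] [Fintype β]
    (p : α → β → ℝ) (q : α → β → ℝ)
    (hp0 : ∀ x y, 0 ≤ p x y) (hp1 : ∑ x, ∑ y, p x y = 1)
    (hq0 : ∀ x y, 0 ≤ q x y) (hq1 : ∀ x, ∑ y, q x y = 1)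
    (hqp : ∀ x y, 0 < p x y → 0 < q x y) :
    (∑ x, ∑ y, p x y * Real.log (p x y / ((∑ y', p x y') * (∑ x', p x' y))) ≥
        ∑ x, ∑ y, p x y * Real.log (q x y / (∑ x', p x' y))) ∧
      (∑ x, ∑ y, p x y * Real.log (p x y / ((∑ y', p x y') * (∑ x', p x' y))) =
          ∑ x, ∑ y, p x y * Real.log (q x y / (∑ x', p x' y)) ↔
        ∀ x y, 0 < p x y → q x y = p x y / (∑ y', p x y')) := by
  set px : α → ℝ := fun x => ∑ y', p x y' with hpxdef
  set py : β → ℝ := fun y => ∑ x', p x' y with hpydef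
  have hpx0 : ∀ x, 0 ≤ px x := fun x => Finset.sum_nonneg fun y _ => hp0 x y
  have hpxy : ∀ x y, p x y ≤ px x := fun x y =>
    Finset.single_le_sum (fun y _ => hp0 x y) (Finset.mem_univ y)
  have hpyx : ∀ x y, p x y ≤ py y := fun x y =>
    Finset.single_le_sum (fun x _ => hp0 x y) (Finset.mem_univ x)
  -- per-term difference identity
  have key : ∀ x y, p x y * Real.log (p x y / (px x * py y))
      - p x y * Real.log (q x y / py y)
      = p x y * Real.log (p x y / (px x * q x y)) := by
    intro x y
    rcases eq_or_lt_of_le (hp0 x y) with h | h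
    · simp [← h]
    · have hx : 0 < px x := lt_of_lt_of_le h (hpxy x y)
      have hy : 0 < py y := lt_of_lt_of_le h (hpyx x y)
      have hq : 0 < q x y := hqp x y h
      rw [Real.log_div h.ne' (mul_pos hx hy).ne',
          Real.log_mul hx.ne' hy.ne',
          Real.log_div hq.ne' hy.ne',
          Real.log_div h.ne' (mul_pos hx hq).ne',
          Real.log_mul hx.ne' hq.ne']
      ring
  have hdiff : (∑ x, ∑ y, p x y * Real.log (p x y / (px x * py y)))
      - (∑ x, ∑ y, p x y * Real.log (q x y / py y))
      = ∑ x, ∑ y, p x y * Real.log (p x y / (px x * q x y)) := by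
    rw [← Finset.sum_sub_distrib]
    refine Finset.sum_congr rfl fun x _ => ?_
    rw [← Finset.sum_sub_distrib]
    exact Finset.sum_congr rfl fun y _ => key x y
  have hzero : ∑ x, ∑ y, (p x y - px x * q x y) = 0 := by
    have h1 : ∀ x, ∑ y, (p x y - px x * q x y) = 0 := by
      intro x
      rw [Finset.sum_sub_distrib, ← Finset.mul_sum, hq1 x, mul_one, hpxdef]
      exact sub_self _
    simp [h1]
  have hsplit : ∑ x, ∑ y, (p x y * Real.log (p x y / (px x * q x y))
      - (p x y - px x * q x y))
      = ∑ x, ∑ y, p x y * Real.log (p x y / (px x * q x y)) := by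
    have : ∑ x, ∑ y, (p x y * Real.log (p x y / (px x * q x y))
        - (p x y - px x * q x y))
        = (∑ x, ∑ y, p x y * Real.log (p x y / (px x * q x y)))
          - ∑ x, ∑ y, (p x y - px x * q x y) := by
      rw [← Finset.sum_sub_distrib]
      refine Finset.sum_congr rfl fun x _ => ?_
      rw [← Finset.sum_sub_distrib]
    rw [this, hzero, sub_zero]
  have hterm : ∀ x y, 0 ≤ p x y * Real.log (p x y / (px x * q x y))
      - (p x y - px x * q x y) := by
    intro x y
    have := ba_aux1 (hp0 x y) (mul_nonneg (hpx0 x) (hq0 x y))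
      (fun h => mul_pos (lt_of_lt_of_le h (hpxy x y)) (hqp x y h))
    linarith
  have hnn : 0 ≤ ∑ x, ∑ y, (p x y * Real.log (p x y / (px x * q x y))
      - (p x y - px x * q x y)) :=
    Finset.sum_nonneg fun x _ => Finset.sum_nonneg fun y _ => hterm x y
  constructor
  · rw [ge_iff_le, ← sub_nonneg, hdiff, ← hsplit]
    exact hnn
  · constructor
    · intro heq
      have hsum0 : ∑ x, ∑ y, (p x y * Real.log (p x y / (px x * q x y))
          - (p x y - px x * q x y)) = 0 := by
        rw [hsplit, ← hdiff, heq, sub_self]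
      intro x y hpos
      have hx : 0 < px x := lt_of_lt_of_le hpos (hpxy x y)
      have hq : 0 < q x y := hqp x y hpos
      have hall := (Finset.sum_eq_zero_iff_of_nonneg
        (fun x _ => Finset.sum_nonneg fun y _ => hterm x y)).mp hsum0
      have hinner := (Finset.sum_eq_zero_iff_of_nonneg
        (fun y _ => hterm x y)).mp (hall x (Finset.mem_univ x)) y (Finset.mem_univ y)
      have heq2 : p x y * Real.log (p x y / (px x * q x y))
          = p x y - px x * q x y := by linarith
      have := ba_aux2 hpos (mul_pos hx hq) heq2
      exact (eq_div_iff (show (∑ y', p x y') ≠ 0 from hx.ne')).mpr (by rw [mul_comm]; exact this)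
    · intro hcond
      have hzero2 : ∀ x y, p x y * Real.log (p x y / (px x * q x y)) = 0 := by
        intro x y
        rcases eq_or_lt_of_le (hp0 x y) with h | h
        · simp [← h]
        · have hx : 0 < px x := lt_of_lt_of_le h (hpxy x y)
          have hq := hcond x y h
          have : px x * q x y = p x y := by
            rw [hq]; field_simp
            exact div_self hx.ne'
          rw [this, div_self h.ne', Real.log_one, mul_zero]
      have : ∑ x, ∑ y, p x y * Real.log (p x y / (px x * q x y)) = 0 := by
        simp [hzero2]
      linarith [hdiff]
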